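/- The integral points (X, Y) ∈ ℤ × ℤ on the elliptic curve Y^2 = X(X^2 + 100X + 750) are exactly (-54, 306), (-54, -306) and (0, 0). -/

import Mathlib

namespace IPA5

/-- squares can't be ≡ t (mod M) when ZMod M says so -/
lemma no_sq_mod (M : ℕ) [NeZero M] (a t : ℤ)
    (hM : ∀ z : ZMod M, a * z^2 ≠ (t : ZMod M)) :
    ∀ x k : ℤ, a * x^2 ≠ (M : ℤ) * k + t := by
  intro x k h
  apply hM (x : ZMod M)
  have : ((a * x^2 : ℤ) : ZMod M) = (((M : ℤ) * k + t : ℤ) : ZMod M) := congrArg _ h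
  push_cast at this
  simpa using this

/-- no integer square strictly between k^2 and (k+1)^2 -/
lemma no_sq_between (k c : ℤ) (hk : 0 ≤ k) (h1 : k^2 < c) (h2 : c < (k+1)^2) :
    ∀ B : ℤ, B^2 ≠ c := by
  intro B hB
  have hb0 : 0 ≤ |B| := abs_nonneg B
  have hb : |B|^2 = c := by rw [sq_abs]; exact hB
  have h3 : k < |B| := by nlinarith
  have h4 : k + 1 ≤ |B| := h3
  nlinarith

/-- Pell sequence for u^2 - 30 v^2 = 1 -/
def P : ℕ → ℤ × ℤ
  | 0 => (1, 0)
  | n+1 => ((P n).1 * 11 + (P n).2 * 60, (P n).1 * 2 + (P n).2 * 11)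

def uu (n : ℕ) : ℤ := (P n).1
def vv (n : ℕ) : ℤ := (P n).2

@[simp] lemma uu0 : uu 0 = 1 := rfl
@[simp] lemma vv0 : vv 0 = 0 := rfl
lemma uuS (n : ℕ) : uu (n+1) = 11 * uu n + 60 * vv n := by simp [uu, vv, P]; ring
lemma vvS (n : ℕ) : vv (n+1) = 2 * uu n + 11 * vv n := by simp [uu, vv, P]; ring

lemma pell (n : ℕ) : (uu n)^2 - 30 * (vv n)^2 = 1 := by
  induction n with
  | zero => norm_num
  | succ n ih => rw [uuS, vvS]; linear_combination ih

lemma pos (n : ℕ) : 1 ≤ uu n ∧ 0 ≤ vv n := by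
  induction n with
  | zero => norm_num
  | succ n ih => rw [uuS, vvS]; constructor <;> linarith [ih.1, ih.2]

lemma vpos (n : ℕ) (h : 1 ≤ n) : 2 ≤ vv n := by
  obtain ⟨m, rfl⟩ : ∃ m, n = m + 1 := ⟨n - 1, by omega⟩
  rw [vvS]; linarith [pos m |>.1, pos m |>.2]

lemma coprime_uv (n : ℕ) : IsCoprime (uu n) (vv n) :=
  ⟨uu n, -30 * vv n, by linear_combination pell n⟩

/-- u mod 3 : 1,2,1,2,... -/
lemma M3 (n : ℕ) : (n % 2 = 0 ∧ uu n % 3 = 1) ∨ (n % 2 = 1 ∧ uu n % 3 = 2) := by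
  induction n with
  | zero => norm_num
  | succ n ih =>
    have h1 := uuS n
    have h2 := vvS n
    rcases ih with ⟨h,hu⟩|⟨h,hu⟩
    · exact Or.inr ⟨by omega, by omega⟩
    · exact Or.inl ⟨by omega, by omega⟩

/-- u mod 5 is always 1 -/
lemma M5 (n : ℕ) : uu n % 5 = 1 := by
  induction n with
  | zero => norm_num
  | succ n ih => have h1 := uuS n; omega

/-- (u,v) mod 8 table by n mod 4 -/
lemma M8 (n : ℕ) :
    (n % 4 = 0 ∧ uu n % 8 = 1 ∧ vv n % 8 = 0) ∨
    (n % 4 = 1 ∧ uu n % 8 = 3 ∧ vv n % 8 = 2) ∨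
    (n % 4 = 2 ∧ uu n % 8 = 1 ∧ vv n % 8 = 4) ∨
    (n % 4 = 3 ∧ uu n % 8 = 3 ∧ vv n % 8 = 6) := by
  induction n with
  | zero => norm_num
  | succ n ih =>
    have h1 := uuS n
    have h2 := vvS n
    rcases ih with ⟨h,hu,hv⟩|⟨h,hu,hv⟩|⟨h,hu,hv⟩|⟨h,hu,hv⟩
    · exact Or.inr (Or.inl ⟨by omega, by omega, by omega⟩)
    · exact Or.inr (Or.inr (Or.inl ⟨by omega, by omega, by omega⟩))
    · exact Or.inr (Or.inr (Or.inr ⟨by omega, by omega, by omega⟩))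
    · exact Or.inl ⟨by omega, by omega, by omega⟩

/-- (u,v) mod 23 table by n mod 3 -/
lemma M23 (n : ℕ) :
    (n % 3 = 0 ∧ uu n % 23 = 1 ∧ vv n % 23 = 0) ∨
    (n % 3 = 1 ∧ uu n % 23 = 11 ∧ vv n % 23 = 2) ∨
    (n % 3 = 2 ∧ uu n % 23 = 11 ∧ vv n % 23 = 21) := by
  induction n with
  | zero => norm_num
  | succ n ih =>
    have h1 := uuS n
    have h2 := vvS n
    rcases ih with ⟨h,hu,hv⟩|⟨h,hu,hv⟩|⟨h,hu,hv⟩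
    · exact Or.inr (Or.inl ⟨by omega, by omega, by omega⟩)
    · exact Or.inr (Or.inr ⟨by omega, by omega, by omega⟩)
    · exact Or.inl ⟨by omega, by omega, by omega⟩

/-- doubling formulas -/
lemma Dbl (m : ℕ) : uu (2*m) = 2 * (uu m)^2 - 1 ∧ vv (2*m) = 2 * uu m * vv m := by
  induction m with
  | zero => norm_num
  | succ m ih =>
    obtain ⟨ihu, ihv⟩ := ih
    have e1 : 2 * (m+1) = (2*m + 1) + 1 := by ring
    have hu1 : uu (2*m+1) = 11 * uu (2*m) + 60 * vv (2*m) := uuS _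
    have hv1 : vv (2*m+1) = 2 * uu (2*m) + 11 * vv (2*m) := vvS _
    have hu2 : uu (2*m+1+1) = 11 * uu (2*m+1) + 60 * vv (2*m+1) := uuS _
    have hv2 : vv (2*m+1+1) = 2 * uu (2*m+1) + 11 * vv (2*m+1) := vvS _
    have hum : uu (m+1) = 11 * uu m + 60 * vv m := uuS _
    have hvm : vv (m+1) = 2 * uu m + 11 * vv m := vvS _
    rw [e1, hu2, hv2, hu1, hv1, ihu, ihv, hum, hvm]
    constructor
    · linear_combination (240 : ℤ) * pell m
    · linear_combination (44 : ℤ) * pell m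


lemma uodd (n : ℕ) : ∃ k, uu n = 2*k+1 := by
  have := M8 n; exact ⟨uu n / 2, by omega⟩

lemma coprime_u2 (n : ℕ) : IsCoprime (uu n) (2 : ℤ) := by
  obtain ⟨k, hk⟩ := uodd n
  exact ⟨1, -k, by linarith⟩

lemma five_dvd_v {m : ℕ} {c : ℤ} (h : (5:ℤ) ∣ c * vv m) (hc : ¬ (5:ℤ) ∣ c) : ∃ w, vv m = 5 * w := by
  have hp : Prime (5 : ℤ) := by norm_num
  rcases hp.2.2 c (vv m) h with h5 | h5
  · exact absurd h5 hc
  · exact h5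

/-- The double descent: u_n cannot be a square while v_n (resp. 2 v_n) is 5 times a square -/
lemma Dlem : ∀ n : ℕ, 1 ≤ n →
    (∀ e f : ℤ, uu n = e^2 → vv n = 5*f^2 → False) ∧
    (∀ e f : ℤ, uu n = e^2 → 2*vv n = 5*f^2 → False) := by
  intro n
  induction n using Nat.strong_induction_on with
  | _ n ih =>
    intro h1
    rcases Nat.even_or_odd n with ⟨m, hm⟩ | hodd
    · -- n = 2m, m ≥ 1
      have hm2 : n = 2*m := by omega
      subst hm2
      have hm1 : 1 ≤ m := by omega
      have hmlt : m < 2*m := by omega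
      obtain ⟨hDu, hDv⟩ := Dbl m
      have humodd := uodd m
      have hM5 := M5 m
      obtain ⟨q, hq⟩ : ∃ q, uu m = 5*q + 1 := ⟨uu m / 5, by omega⟩
      constructor
      · -- v_{2m} = 2 u_m v_m = 5 f^2
        intro e f _ hv
        rw [hDv] at hv
        have h5 : (5:ℤ) ∣ (2 * uu m) * vv m := ⟨f^2, by linarith⟩
        obtain ⟨w, hw⟩ := five_dvd_v h5 (by omega)
        have hw0 : 0 ≤ w := by have := (pos m).2; omega
        have heq2 : uu m * (2*w) = f^2 := by
          have : 2 * uu m * (5*w) = 5 * f^2 := by rw [← hw]; exact hv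
          linarith
        have hcop : IsCoprime (uu m) (2*w) := by
          have h2v : IsCoprime (uu m) (2 * vv m) := (coprime_u2 m).mul_right (coprime_uv m)
          exact h2v.of_isCoprime_of_dvd_right ⟨5, by rw [hw]; ring⟩
        obtain ⟨e', he'⟩ := Int.sq_of_isCoprime hcop heq2
        obtain ⟨b, hb⟩ := Int.sq_of_isCoprime hcop.symm (show (2*w) * uu m = f^2 by linear_combination heq2)
        have hu' : uu m = e'^2 := by
          rcases he' with h | h
          · exact h
          · nlinarith [pos m |>.1, sq_nonneg e']
        have hvm2 : 2 * vv m = 5 * b^2 := by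
          rcases hb with h | h
          · rw [hw]; linarith
          · exfalso
            have : 2 ≤ vv m := vpos m hm1
            nlinarith [sq_nonneg b]
        exact (ih m hmlt hm1).2 e' b hu' hvm2
      · -- 2 v_{2m} = 4 u_m v_m = 5 f^2
        intro e f _ hv
        rw [hDv] at hv
        have hf2 : (2:ℤ) ∣ f := by
          have hp : Prime (2:ℤ) := by norm_num
          have : (2:ℤ) ∣ f^2 := ⟨2 * uu m * vv m - 2*f^2, by linarith⟩
          exact hp.dvd_of_dvd_pow this
        obtain ⟨f2, hf2e⟩ := hf2
        have heq1 : uu m * vv m = 5 * f2^2 := by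
          have : 2 * (2 * uu m * vv m) = 5 * (2*f2)^2 := by rw [← hf2e]; linarith
          linarith [this]
        have h5 : (5:ℤ) ∣ uu m * vv m := ⟨f2^2, heq1⟩
        obtain ⟨w, hw⟩ := five_dvd_v h5 (by omega)
        have hw0 : 0 ≤ w := by have := (pos m).2; omega
        have heq2 : uu m * w = f2^2 := by
          have : uu m * (5*w) = 5 * f2^2 := by rw [← hw]; exact heq1
          linarith
        have hcop : IsCoprime (uu m) w :=
          (coprime_uv m).of_isCoprime_of_dvd_right ⟨5, by rw [hw]; ring⟩
        obtain ⟨e', he'⟩ := Int.sq_of_isCoprime hcop heq2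
        obtain ⟨b, hb⟩ := Int.sq_of_isCoprime hcop.symm (show w * uu m = f2^2 by linear_combination heq2)
        have hu' : uu m = e'^2 := by
          rcases he' with h | h
          · exact h
          · nlinarith [pos m |>.1, sq_nonneg e']
        have hvm2 : vv m = 5 * b^2 := by
          rcases hb with h | h
          · rw [hw, h]
          · have : 2 ≤ vv m := vpos m hm1
            nlinarith [sq_nonneg b]
        exact (ih m hmlt hm1).1 e' b hu' hvm2
    · -- n odd : u_n ≡ 3 mod 8, not a square
      constructor <;>
      · intro e f hu _
        have h8 : uu n % 8 = 3 := by
          have := M8 n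
          obtain ⟨j, hj⟩ := hodd
          omega
        obtain ⟨k, hk⟩ : ∃ k, uu n = 8*k + 3 := ⟨uu n / 8, by omega⟩
        refine no_sq_mod 8 1 3 (by decide) e k ?_
        push_cast
        linarith

/-- classification of B^2 = 30 s^2 + 70 with B, s ≥ 0 -/
lemma cls : ∀ (k : ℕ) (s B : ℤ), s.natAbs ≤ k → 0 ≤ s → 0 ≤ B → B^2 = 30*s^2 + 70 →
    ∃ n, (B = 10*uu n + 30*vv n ∧ s = uu n + 10*vv n) ∨
         (B = 10*uu n - 30*vv n ∧ s = 10*vv n - uu n) := by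
  intro k
  induction k with
  | zero =>
    intro s B hk hs hB heq
    have hs0 : s = 0 := by omega
    subst hs0
    norm_num at heq
    exact absurd heq (no_sq_between 8 70 (by norm_num) (by norm_num) (by norm_num) B)
  | succ k ih =>
    intro s B hk hs hB heq
    by_cases h17 : s ≤ 16
    · interval_cases s <;> norm_num at heq
      · exact absurd heq (no_sq_between 8 70 (by norm_num) (by norm_num) (by norm_num) B)
      · -- s = 1, B = 10
        refine ⟨0, Or.inl ⟨?_, by rw [uu0, vv0]; norm_num⟩⟩
        rw [uu0, vv0]
        have : (B - 10) * (B + 10) = 0 := by linarith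
        rcases mul_eq_zero.mp this with h | h <;> omega
      · exact absurd heq (no_sq_between 13 190 (by norm_num) (by norm_num) (by norm_num) B)
      · exact absurd heq (no_sq_between 18 340 (by norm_num) (by norm_num) (by norm_num) B)
      · exact absurd heq (no_sq_between 23 550 (by norm_num) (by norm_num) (by norm_num) B)
      · exact absurd heq (no_sq_between 28 820 (by norm_num) (by norm_num) (by norm_num) B)
      · exact absurd heq (no_sq_between 33 1150 (by norm_num) (by norm_num) (by norm_num) B)
      · exact absurd heq (no_sq_between 39 1540 (by norm_num) (by norm_num) (by norm_num) B)
      · exact absurd heq (no_sq_between 44 1990 (by norm_num) (by norm_num) (by norm_num) B)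
      · -- s = 9, B = 50
        refine ⟨1, Or.inr ⟨?_, ?_⟩⟩ <;>
        · have h11 : uu 1 = 11 := by rw [uuS]; norm_num
          have h2 : vv 1 = 2 := by rw [vvS]; norm_num
          rw [h11, h2]
          have : (B - 50) * (B + 50) = 0 := by linarith
          rcases mul_eq_zero.mp this with h | h <;> omega
      · exact absurd heq (no_sq_between 55 3070 (by norm_num) (by norm_num) (by norm_num) B)
      · exact absurd heq (no_sq_between 60 3700 (by norm_num) (by norm_num) (by norm_num) B)
      · exact absurd heq (no_sq_between 66 4390 (by norm_num) (by norm_num) (by norm_num) B)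
      · exact absurd heq (no_sq_between 71 5140 (by norm_num) (by norm_num) (by norm_num) B)
      · exact absurd heq (no_sq_between 77 5950 (by norm_num) (by norm_num) (by norm_num) B)
      · exact absurd heq (no_sq_between 82 6820 (by norm_num) (by norm_num) (by norm_num) B)
      · exact absurd heq (no_sq_between 88 7750 (by norm_num) (by norm_num) (by norm_num) B)
    · push_neg at h17
      have hB' : 0 ≤ 11*B - 60*s := by nlinarith [heq, hs, hB]
      have hs' : 0 ≤ 11*s - 2*B := by nlinarith [heq, h17, hB]
      have hlt : 11*s - 2*B < s := by nlinarith [heq, hs, hB]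
      have heq' : (11*B - 60*s)^2 = 30*(11*s - 2*B)^2 + 70 := by linear_combination heq
      have hk' : (11*s - 2*B).natAbs ≤ k := by omega
      obtain ⟨n, hc⟩ := ih (11*s - 2*B) (11*B - 60*s) hk' hs' hB' heq'
      refine ⟨n+1, ?_⟩
      have hu := uuS n
      have hv := vvS n
      rcases hc with ⟨h1, h2⟩ | ⟨h1, h2⟩
      · exact Or.inl ⟨by rw [hu, hv]; linarith, by rw [hu, hv]; linarith⟩
      · exact Or.inr ⟨by rw [hu, hv]; linarith, by rw [hu, hv]; linarith⟩


lemma mk8 (u v w : ℤ) (hw : v = 5*w) (hu : u % 8 = 3) (hv : v % 8 = 2 ∨ v % 8 = 6) :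
    ∃ k, u + 50*w = 8*k + 7 := ⟨(u + 50*w - 7)/8, by omega⟩
lemma mk23a (u v w : ℤ) (hw : v = 5*w) (hu : u % 23 = 1) (hv : v % 23 = 0) :
    ∃ k, 50*w - u = 23*k + 22 := ⟨(50*w - u - 22)/23, by omega⟩
lemma mk23b (v w : ℤ) (hw : v = 5*w) (hv : v % 23 = 2) : ∃ k, 2*w = 23*k + 10 := ⟨(2*w - 10)/23, by omega⟩
lemma mk23c (u v w : ℤ) (hw : v = 5*w) (hu : u % 23 = 11) (hv : v % 23 = 21) :
    ∃ k, 50*w - u = 23*k + 15 := ⟨(50*w - u - 15)/23, by omega⟩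

/-- even-index kill without u-square condition -/
lemma DlemEven (m : ℕ) (hm : 1 ≤ m) (hpar : m % 2 = 0) :
    ∀ b : ℤ, 2 * vv m = 5 * b^2 → False := by
  intro b hv
  obtain ⟨t, rfl⟩ : ∃ t, m = 2*t := ⟨m/2, by omega⟩
  have ht1 : 1 ≤ t := by omega
  obtain ⟨-, hDv⟩ := Dbl t
  rw [hDv] at hv
  -- 4 u_t v_t = 5 b^2
  have hb2 : (2:ℤ) ∣ b := by
    have hp : Prime (2:ℤ) := by norm_num
    exact hp.dvd_of_dvd_pow (n := 2) ⟨2*(uu t * vv t) - 2*b^2, by linarith⟩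
  obtain ⟨b2, rfl⟩ := hb2
  have heq1 : uu t * vv t = 5 * b2^2 := by
    have h4 : 4*(uu t * vv t) = 4*(5 * b2^2) := by nlinarith [hv]
    linarith
  have hM5 := M5 t
  have h5 : (5:ℤ) ∣ uu t * vv t := ⟨b2^2, heq1⟩
  obtain ⟨w, hw⟩ := five_dvd_v (by rwa [] at h5) (by omega)
  have heq2 : uu t * w = b2^2 := by
    have : uu t * (5*w) = 5 * b2^2 := by rw [← hw]; exact heq1
    linarith
  have hcop : IsCoprime (uu t) w :=
    (coprime_uv t).of_isCoprime_of_dvd_right ⟨5, by rw [hw]; ring⟩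
  obtain ⟨e', he'⟩ := Int.sq_of_isCoprime hcop heq2
  obtain ⟨f', hf'⟩ := Int.sq_of_isCoprime hcop.symm (show w * uu t = b2^2 by linear_combination heq2)
  have hu' : uu t = e'^2 := by
    rcases he' with h | h
    · exact h
    · nlinarith [pos t |>.1, sq_nonneg e']
  have hw0 : 0 ≤ w := by have := (pos t).2; omega
  have hv' : vv t = 5 * f'^2 := by
    rcases hf' with h | h
    · rw [hw, h]
    · have h0 : w = 0 := by nlinarith [sq_nonneg f']
      rw [hw, h0]
      nlinarith [sq_nonneg f', h]
  exact (Dlem t ht1).1 e' f' hu' hv'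

/-- the quartic: no solutions of s^2 = 750 g^2 + 100 g + 1 with g ≥ 1 a perfect square -/
lemma quartic (g s : ℤ) (hg : 1 ≤ g) (hsq : IsSquare g)
    (h : s^2 = 750*g^2 + 100*g + 1) : False := by
  obtain ⟨r, hr⟩ := hsq
  have habs : |s|^2 = 750*g^2 + 100*g + 1 := by rw [sq_abs]; exact h
  have hB : (150*g + 10)^2 = 30*|s|^2 + 70 := by rw [sq_abs]; linear_combination (-30 : ℤ) * h
  obtain ⟨n, hc⟩ := cls (|s|).natAbs |s| (150*g+10) le_rfl (abs_nonneg s) (by linarith) hB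
  rcases hc with ⟨h1, -⟩ | ⟨h1, -⟩
  · -- family A : 15 g = u_n + 3 v_n - 1
    have h15 : 15*g = uu n + 3*vv n - 1 := by linarith
    have hev : n % 2 = 0 := by rcases M3 n with ⟨he, hu⟩ | ⟨ho, hu⟩ <;> omega
    obtain ⟨m, rfl⟩ : ∃ m, n = 2*m := ⟨n/2, by omega⟩
    obtain ⟨hDu, hDv⟩ := Dbl m
    rw [hDu, hDv] at h15
    have key : 5*g = 2*vv m*uu m + 20*(vv m)^2 := by linarith [pell m]
    obtain ⟨q, hq⟩ : ∃ q, uu m = 5*q + 1 := ⟨uu m / 5, by have := M5 m; omega⟩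
    have h5 : (5:ℤ) ∣ 2 * vv m := by
      refine ⟨g - 2*q*vv m - 4*(vv m)^2, ?_⟩
      rw [hq] at key; linarith
    have hp5 : Prime (5:ℤ) := by norm_num
    obtain ⟨w, hw⟩ : ∃ w, vv m = 5 * w := by
      rcases hp5.2.2 2 (vv m) h5 with h | h
      · exact absurd h (by norm_num)
      · exact h
    have hw0 : 0 ≤ w := by have := (pos m).2; omega
    have hg2 : g = 2*w*(uu m) + 100*w^2 := by rw [hw] at key; linarith
    have heq2 : (2*w) * (uu m + 50*w) = r^2 := by
      have : g = r^2 := by rw [hr]; ring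
      linarith [hg2, this]
    have pw : (uu m)^2 - 750*w^2 = 1 := by
      have := pell m; rw [hw] at this; linear_combination this
    have hcop : IsCoprime (2*w) (uu m + 50*w) :=
      ⟨-25*uu m - 375*w, uu m, by linear_combination pw⟩
    obtain ⟨b, hb⟩ := Int.sq_of_isCoprime hcop heq2
    obtain ⟨c, hc2⟩ := Int.sq_of_isCoprime hcop.symm
      (show (uu m + 50*w) * (2*w) = r^2 by linear_combination heq2)
    have hw1 : 1 ≤ w := by
      rcases lt_or_ge 0 w with h' | h'
      · omega
      · exfalso
        have hw00 : w = 0 := by omega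
        have hr2 : r^2 = 0 := by rw [hw00] at heq2; linarith [heq2]
        have hr0 : r = 0 := by exact pow_eq_zero_iff (by norm_num) |>.mp hr2
        rw [hr0] at hr
        simp at hr
        omega
    have hbb : 2*w = b^2 := by
      rcases hb with h' | h'
      · exact h'
      · linarith [sq_nonneg b]
    have hcc : uu m + 50*w = c^2 := by
      rcases hc2 with h' | h'
      · exact h'
      · linarith [sq_nonneg c, pos m |>.1]
    -- m odd: u_m + 50 w ≡ 7 mod 8
    rcases Nat.even_or_odd m with ⟨t, hteq⟩ | hodd
    · -- m even : 2 v_m = 5 b^2 with m even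
      have hm1 : 1 ≤ m := by
        rcases Nat.eq_zero_or_pos m with rfl | h'
        · exfalso; simp at hw; omega
        · omega
      exact DlemEven m hm1 (by omega) b (by rw [hw]; linarith)
    · exfalso
      obtain ⟨j, hj⟩ := hodd
      have hM8 := M8 m
      obtain ⟨k, hk⟩ : ∃ k, uu m + 50*w = 8*k + 7 := by
        refine mk8 (uu m) (vv m) w hw ?_ ?_ <;>
          rcases hM8 with ⟨h4, hu8, hv8⟩ | ⟨h4, hu8, hv8⟩ | ⟨h4, hu8, hv8⟩ | ⟨h4, hu8, hv8⟩ <;> omega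
      refine no_sq_mod 8 1 7 (by decide) c k ?_
      push_cast
      linarith [hcc, hk]
  · -- family B : 15 g = u_n - 3 v_n - 1
    have h15 : 15*g = uu n - 3*vv n - 1 := by linarith
    have hev : n % 2 = 0 := by rcases M3 n with ⟨he, hu⟩ | ⟨ho, hu⟩ <;> omega
    obtain ⟨m, rfl⟩ : ∃ m, n = 2*m := ⟨n/2, by omega⟩
    obtain ⟨hDu, hDv⟩ := Dbl m
    rw [hDu, hDv] at h15
    have key : 5*g = 20*(vv m)^2 - 2*vv m*uu m := by linarith [pell m]
    obtain ⟨q, hq⟩ : ∃ q, uu m = 5*q + 1 := ⟨uu m / 5, by have := M5 m; omega⟩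
    have h5 : (5:ℤ) ∣ 2 * vv m := by
      refine ⟨4*(vv m)^2 - 2*q*vv m - g, ?_⟩
      rw [hq] at key; linarith
    have hp5 : Prime (5:ℤ) := by norm_num
    obtain ⟨w, hw⟩ : ∃ w, vv m = 5 * w := by
      rcases hp5.2.2 2 (vv m) h5 with h | h
      · exact absurd h (by norm_num)
      · exact h
    have hw0 : 0 ≤ w := by have := (pos m).2; omega
    have hg2 : g = 100*w^2 - 2*w*(uu m) := by rw [hw] at key; linarith
    have heq2 : (2*w) * (50*w - uu m) = r^2 := by
      have : g = r^2 := by rw [hr]; ring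
      linarith [hg2, this]
    have pw : (uu m)^2 - 750*w^2 = 1 := by
      have := pell m; rw [hw] at this; linear_combination this
    have hcop : IsCoprime (2*w) (50*w - uu m) :=
      ⟨25*uu m - 375*w, -uu m, by linear_combination pw⟩
    obtain ⟨b, hb⟩ := Int.sq_of_isCoprime hcop heq2
    obtain ⟨c, hc2⟩ := Int.sq_of_isCoprime hcop.symm
      (show (50*w - uu m) * (2*w) = r^2 by linear_combination heq2)
    have hw1 : 1 ≤ w := by
      rcases lt_or_ge 0 w with h' | h'
      · omega
      · exfalso
        have hw00 : w = 0 := by omega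
        have hr2 : r^2 = 0 := by rw [hw00] at heq2; linarith [heq2]
        have hr0 : r = 0 := by exact pow_eq_zero_iff (by norm_num) |>.mp hr2
        rw [hr0] at hr
        simp at hr
        omega
    have hbb : 2*w = b^2 := by
      rcases hb with h' | h'
      · exact h'
      · linarith [sq_nonneg b]
    have hcc : 50*w - uu m = c^2 := by
      rcases hc2 with h' | h'
      · exact h'
      · exfalso
        have hgr : g = r^2 := by rw [hr]; ring
        nlinarith [sq_nonneg c]
    -- kill all cases mod 23
    have hM23 := M23 m
    rcases hM23 with ⟨h3, hu23, hv23⟩ | ⟨h3, hu23, hv23⟩ | ⟨h3, hu23, hv23⟩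
    · -- w ≡ 0, u ≡ 1 : c^2 = 50w - u ≡ 22 mod 23
      obtain ⟨k, hk⟩ : ∃ k, 50*w - uu m = 23*k + 22 := mk23a _ _ _ hw hu23 hv23
      refine no_sq_mod 23 1 22 (by decide) c k ?_
      push_cast; linarith [hcc, hk]
    · -- v ≡ 2 mod 23 : w ≡ 5, b^2 = 2w ≡ 10 mod 23
      obtain ⟨k, hk⟩ : ∃ k, 2*w = 23*k + 10 := mk23b _ _ hw hv23
      refine no_sq_mod 23 1 10 (by decide) b k ?_
      push_cast; linarith [hbb, hk]
    · -- v ≡ 21 : w ≡ 18, c^2 = 50w - u ≡ 15 mod 23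
      obtain ⟨k, hk⟩ : ∃ k, 50*w - uu m = 23*k + 15 := mk23c _ _ _ hw hu23 hv23
      refine no_sq_mod 23 1 15 (by decide) c k ?_
      push_cast; linarith [hcc, hk]


lemma no_poly_mod (M : ℕ) [NeZero M] (a e : ℤ)
    (hM : ∀ p q : ZMod M, q^2 ≠ (a : ZMod M)*p^4 + 100*p^2 + (e : ZMod M))
    (r s : ℤ) (h : s^2 = a*r^4 + 100*r^2 + e) : False := by
  apply hM (r : ZMod M) (s : ZMod M)
  have h2 := congrArg (fun z : ℤ => (z : ZMod M)) h
  push_cast at h2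
  exact h2

set_option maxRecDepth 40000 in
lemma divisor_kill (d : ℕ) (hdvd : d ∣ 750) (r s : ℤ)
    (hr1 : 1 ≤ r^2)
    (hcop : IsCoprime (r^2 : ℤ) (s^2))
    (E : (d:ℤ)^2*r^4 + 100*(d:ℤ)*r^2 + 750 = (d:ℤ)*s^2) : False := by
  have hmem : d ∈ Nat.divisors 750 := Nat.mem_divisors.mpr ⟨hdvd, by norm_num⟩
  fin_cases hmem <;> push_cast at E
  · exact no_poly_mod 4 1 750 (by decide) r s (by linarith)
  · exact no_poly_mod 8 2 375 (by decide) r s (by linarith)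
  · exact no_poly_mod 49 3 250 (by decide) r s (by linarith)
  · exact no_poly_mod 4 5 150 (by decide) r s (by linarith)
  · exact no_poly_mod 8 6 125 (by decide) r s (by linarith)
  · exact no_poly_mod 9 10 75 (by decide) r s (by linarith)
  · exact no_poly_mod 8 15 50 (by decide) r s (by linarith)
  · exact no_poly_mod 4 25 30 (by decide) r s (by linarith)
  · -- d = 30 : use coprimality of r^2, s^2
    have E2 : s^2 = 30*r^4 + 100*r^2 + 25 := by linarith
    have hp : Prime (5:ℤ) := by norm_num
    have h5s : (5:ℤ) ∣ s := by
      refine hp.dvd_of_dvd_pow (n := 2) ⟨6*r^4 + 20*r^2 + 5, by linarith⟩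
    obtain ⟨s2, rfl⟩ := h5s
    have h5r : (5:ℤ) ∣ r := by
      refine hp.dvd_of_dvd_pow (n := 4) ?_
      have h6 : (5:ℤ) ∣ 6 * r^4 := ⟨s2^2 - 4*r^2 - 1, by linarith⟩
      rcases hp.2.2 6 (r^4) h6 with h' | h'
      · exact absurd h' (by norm_num)
      · exact h'
    have : IsUnit (5:ℤ) :=
      hcop.isUnit_of_dvd' (dvd_pow h5r (by norm_num)) (dvd_pow (Dvd.dvd.mul_right ⟨1, rfl⟩ s2) (by norm_num))
    rw [Int.isUnit_iff] at this
    norm_num at this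
  · exact no_poly_mod 8 50 15 (by decide) r s (by linarith)
  · exact no_poly_mod 25 75 10 (by decide) r s (by linarith)
  · exact no_poly_mod 4 125 6 (by decide) r s (by linarith)
  · exact no_poly_mod 8 150 5 (by decide) r s (by linarith)
  · exact no_poly_mod 5 250 3 (by decide) r s (by linarith)
  · exact no_poly_mod 5 375 2 (by decide) r s (by linarith)
  · -- d = 750
    exact quartic (r^2) s hr1 ⟨r, by ring⟩ (by linarith)

lemma posCase (X Y : ℤ) (hX : 0 < X) (h : Y^2 = X*(X^2+100*X+750)) : False := by
  have hfpos : 0 < X^2+100*X+750 := by nlinarith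
  have hDpos : 0 < Int.gcd X (X^2+100*X+750) := Int.gcd_pos_iff.mpr (Or.inl hX.ne')
  set D : ℕ := Int.gcd X (X^2+100*X+750) with hD
  have hdX : (D:ℤ) ∣ X := Int.gcd_dvd_left _ _
  have hdf : (D:ℤ) ∣ X^2+100*X+750 := Int.gcd_dvd_right _ _
  have hDZ : (0:ℤ) < (D:ℤ) := by exact_mod_cast hDpos
  obtain ⟨a, ha⟩ := hdX
  obtain ⟨b, hb⟩ := hdf
  have hane : a = X / (D:ℤ) := by
    rw [ha, Int.mul_ediv_cancel_left _ (ne_of_gt hDZ)]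
  have hbne : b = (X^2+100*X+750) / (D:ℤ) := by
    rw [hb, Int.mul_ediv_cancel_left _ (ne_of_gt hDZ)]
  have hcop : IsCoprime a b := by
    rw [Int.isCoprime_iff_gcd_eq_one, hane, hbne]
    exact Int.gcd_div_gcd_div_gcd hDpos
  have hXa : 0 < (D:ℤ)*a := ha ▸ hX
  have hapos : 0 < a := by nlinarith
  have hXb : 0 < (D:ℤ)*b := hb ▸ hfpos
  have hbpos : 0 < b := by nlinarith
  have hd2 : (D:ℤ)^2 ∣ Y^2 := ⟨a*b, by rw [h, hb, ha]; ring⟩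
  have hdY : (D:ℤ) ∣ Y := (Int.pow_dvd_pow_iff (two_ne_zero)).mp hd2
  obtain ⟨c, hc⟩ := hdY
  have hab : a*b = c^2 := by
    have e1 : (D:ℤ)^2*(a*b) = Y^2 := by rw [h, hb, ha]; ring
    have e2 : Y^2 = (D:ℤ)^2*c^2 := by rw [hc]; ring
    exact mul_left_cancel₀ (pow_ne_zero 2 (ne_of_gt hDZ)) (e1.trans e2)
  obtain ⟨r, hra⟩ := Int.sq_of_isCoprime hcop hab
  obtain ⟨t, hsb⟩ := Int.sq_of_isCoprime hcop.symm (show b*a = c^2 by linear_combination hab)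
  have hra' : a = r^2 := by
    rcases hra with h' | h'
    · exact h'
    · exfalso; nlinarith [sq_nonneg r]
  have hsb' : b = t^2 := by
    rcases hsb with h' | h'
    · exact h'
    · exfalso; nlinarith [sq_nonneg t]
  have hdvd750 : D ∣ 750 := by
    have hz : (D:ℤ) ∣ 750 := by
      have h750 : (750:ℤ) = (X^2+100*X+750) - X*(X+100) := by ring
      rw [h750]
      exact dvd_sub (Dvd.intro b hb.symm) ((Dvd.intro a ha.symm).mul_right _)
    exact_mod_cast hz
  refine divisor_kill D hdvd750 r t (by linarith) ?_ ?_
  · rw [← hra', ← hsb']; exact hcop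
  · have e3 : ((D:ℤ)*r^2)^2 + 100*((D:ℤ)*r^2) + 750 = (D:ℤ)*t^2 := by
      rw [← hra', ← ha, ← hsb', ← hb]
    linear_combination e3


end IPA5

theorem integral_points_alpha_five (X Y : ℤ) :
    Y^2 = X * (X^2 + 100*X + 750) ↔
      (X, Y) = (-54, 306) ∨ (X, Y) = (-54, -306) ∨ (X, Y) = (0, 0) := by
  constructor
  · intro h
    rcases lt_trichotomy X 0 with hneg | rfl | hpos
    · have h9 : X ≤ -9 := by
        by_contra hc
        push_neg at hc
        have h8 : (0:ℤ) ≤ X + 8 := by omega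
        have h92 : (0:ℤ) ≤ X + 92 := by omega
        have hnX : (0:ℤ) ≤ -X := by omega
        nlinarith [sq_nonneg Y, mul_nonneg (mul_nonneg h8 h92) hnX]
      have h91 : -91 ≤ X := by
        by_contra hc
        push_neg at hc
        have h8 : (0:ℤ) ≤ -(X + 8) := by omega
        have h92 : (0:ℤ) ≤ -(X + 92) := by omega
        have hnX : (0:ℤ) ≤ -X := by omega
        nlinarith [sq_nonneg Y, mul_nonneg (mul_nonneg h8 h92) hnX]
      interval_cases X <;> norm_num at h
      · exact absurd h (IPA5.no_sq_between 79 6279 (by norm_num) (by norm_num) (by norm_num) Y)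
      · exact absurd h (IPA5.no_sq_between 116 13500 (by norm_num) (by norm_num) (by norm_num) Y)
      · exact absurd h (IPA5.no_sq_between 142 20381 (by norm_num) (by norm_num) (by norm_num) Y)
      · exact absurd h (IPA5.no_sq_between 164 26928 (by norm_num) (by norm_num) (by norm_num) Y)
      · exact absurd h (IPA5.no_sq_between 182 33147 (by norm_num) (by norm_num) (by norm_num) Y)
      · exact absurd h (IPA5.no_sq_between 197 39044 (by norm_num) (by norm_num) (by norm_num) Y)
      · exact absurd h (IPA5.no_sq_between 211 44625 (by norm_num) (by norm_num) (by norm_num) Y)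
      · exact absurd h (IPA5.no_sq_between 223 49896 (by norm_num) (by norm_num) (by norm_num) Y)
      · exact absurd h (IPA5.no_sq_between 234 54863 (by norm_num) (by norm_num) (by norm_num) Y)
      · exact absurd h (IPA5.no_sq_between 243 59532 (by norm_num) (by norm_num) (by norm_num) Y)
      · exact absurd h (IPA5.no_sq_between 252 63909 (by norm_num) (by norm_num) (by norm_num) Y)
      · exact absurd h (IPA5.no_sq_between 260 68000 (by norm_num) (by norm_num) (by norm_num) Y)
      · exact absurd h (IPA5.no_sq_between 267 71811 (by norm_num) (by norm_num) (by norm_num) Y)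
      · exact absurd h (IPA5.no_sq_between 274 75348 (by norm_num) (by norm_num) (by norm_num) Y)
      · exact absurd h (IPA5.no_sq_between 280 78617 (by norm_num) (by norm_num) (by norm_num) Y)
      · exact absurd h (IPA5.no_sq_between 285 81624 (by norm_num) (by norm_num) (by norm_num) Y)
      · exact absurd h (IPA5.no_sq_between 290 84375 (by norm_num) (by norm_num) (by norm_num) Y)
      · exact absurd h (IPA5.no_sq_between 294 86876 (by norm_num) (by norm_num) (by norm_num) Y)
      · exact absurd h (IPA5.no_sq_between 298 89133 (by norm_num) (by norm_num) (by norm_num) Y)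
      · exact absurd h (IPA5.no_sq_between 301 91152 (by norm_num) (by norm_num) (by norm_num) Y)
      · exact absurd h (IPA5.no_sq_between 304 92939 (by norm_num) (by norm_num) (by norm_num) Y)
      · exact absurd h (IPA5.no_sq_between 307 94500 (by norm_num) (by norm_num) (by norm_num) Y)
      · exact absurd h (IPA5.no_sq_between 309 95841 (by norm_num) (by norm_num) (by norm_num) Y)
      · exact absurd h (IPA5.no_sq_between 311 96968 (by norm_num) (by norm_num) (by norm_num) Y)
      · exact absurd h (IPA5.no_sq_between 312 97887 (by norm_num) (by norm_num) (by norm_num) Y)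
      · exact absurd h (IPA5.no_sq_between 314 98604 (by norm_num) (by norm_num) (by norm_num) Y)
      · exact absurd h (IPA5.no_sq_between 314 99125 (by norm_num) (by norm_num) (by norm_num) Y)
      · exact absurd h (IPA5.no_sq_between 315 99456 (by norm_num) (by norm_num) (by norm_num) Y)
      · exact absurd h (IPA5.no_sq_between 315 99603 (by norm_num) (by norm_num) (by norm_num) Y)
      · exact absurd h (IPA5.no_sq_between 315 99572 (by norm_num) (by norm_num) (by norm_num) Y)
      · exact absurd h (IPA5.no_sq_between 315 99369 (by norm_num) (by norm_num) (by norm_num) Y)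
      · exact absurd h (IPA5.no_sq_between 314 99000 (by norm_num) (by norm_num) (by norm_num) Y)
      · exact absurd h (IPA5.no_sq_between 313 98471 (by norm_num) (by norm_num) (by norm_num) Y)
      · exact absurd h (IPA5.no_sq_between 312 97788 (by norm_num) (by norm_num) (by norm_num) Y)
      · exact absurd h (IPA5.no_sq_between 311 96957 (by norm_num) (by norm_num) (by norm_num) Y)
      · exact absurd h (IPA5.no_sq_between 309 95984 (by norm_num) (by norm_num) (by norm_num) Y)
      · exact absurd h (IPA5.no_sq_between 308 94875 (by norm_num) (by norm_num) (by norm_num) Y)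
      · -- X = -54
        have h1 : (Y - 306)*(Y + 306) = 0 := by linarith
        rcases mul_eq_zero.mp h1 with h2 | h2
        · left; have hY : Y = 306 := by linarith
          subst hY; rfl
        · right; left; have hY : Y = -306 := by linarith
          subst hY; rfl
      · exact absurd h (IPA5.no_sq_between 303 92273 (by norm_num) (by norm_num) (by norm_num) Y)
      · exact absurd h (IPA5.no_sq_between 301 90792 (by norm_num) (by norm_num) (by norm_num) Y)
      · exact absurd h (IPA5.no_sq_between 298 89199 (by norm_num) (by norm_num) (by norm_num) Y)
      · exact absurd h (IPA5.no_sq_between 295 87500 (by norm_num) (by norm_num) (by norm_num) Y)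
      · exact absurd h (IPA5.no_sq_between 292 85701 (by norm_num) (by norm_num) (by norm_num) Y)
      · exact absurd h (IPA5.no_sq_between 289 83808 (by norm_num) (by norm_num) (by norm_num) Y)
      · exact absurd h (IPA5.no_sq_between 286 81827 (by norm_num) (by norm_num) (by norm_num) Y)
      · exact absurd h (IPA5.no_sq_between 282 79764 (by norm_num) (by norm_num) (by norm_num) Y)
      · exact absurd h (IPA5.no_sq_between 278 77625 (by norm_num) (by norm_num) (by norm_num) Y)
      · exact absurd h (IPA5.no_sq_between 274 75416 (by norm_num) (by norm_num) (by norm_num) Y)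
      · exact absurd h (IPA5.no_sq_between 270 73143 (by norm_num) (by norm_num) (by norm_num) Y)
      · exact absurd h (IPA5.no_sq_between 266 70812 (by norm_num) (by norm_num) (by norm_num) Y)
      · exact absurd h (IPA5.no_sq_between 261 68429 (by norm_num) (by norm_num) (by norm_num) Y)
      · exact absurd h (IPA5.no_sq_between 256 66000 (by norm_num) (by norm_num) (by norm_num) Y)
      · exact absurd h (IPA5.no_sq_between 252 63531 (by norm_num) (by norm_num) (by norm_num) Y)
      · exact absurd h (IPA5.no_sq_between 247 61028 (by norm_num) (by norm_num) (by norm_num) Y)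
      · exact absurd h (IPA5.no_sq_between 241 58497 (by norm_num) (by norm_num) (by norm_num) Y)
      · exact absurd h (IPA5.no_sq_between 236 55944 (by norm_num) (by norm_num) (by norm_num) Y)
      · exact absurd h (IPA5.no_sq_between 231 53375 (by norm_num) (by norm_num) (by norm_num) Y)
      · exact absurd h (IPA5.no_sq_between 225 50796 (by norm_num) (by norm_num) (by norm_num) Y)
      · exact absurd h (IPA5.no_sq_between 219 48213 (by norm_num) (by norm_num) (by norm_num) Y)
      · exact absurd h (IPA5.no_sq_between 213 45632 (by norm_num) (by norm_num) (by norm_num) Y)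
      · exact absurd h (IPA5.no_sq_between 207 43059 (by norm_num) (by norm_num) (by norm_num) Y)
      · exact absurd h (IPA5.no_sq_between 201 40500 (by norm_num) (by norm_num) (by norm_num) Y)
      · exact absurd h (IPA5.no_sq_between 194 37961 (by norm_num) (by norm_num) (by norm_num) Y)
      · exact absurd h (IPA5.no_sq_between 188 35448 (by norm_num) (by norm_num) (by norm_num) Y)
      · exact absurd h (IPA5.no_sq_between 181 32967 (by norm_num) (by norm_num) (by norm_num) Y)
      · exact absurd h (IPA5.no_sq_between 174 30524 (by norm_num) (by norm_num) (by norm_num) Y)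
      · exact absurd h (IPA5.no_sq_between 167 28125 (by norm_num) (by norm_num) (by norm_num) Y)
      · exact absurd h (IPA5.no_sq_between 160 25776 (by norm_num) (by norm_num) (by norm_num) Y)
      · exact absurd h (IPA5.no_sq_between 153 23483 (by norm_num) (by norm_num) (by norm_num) Y)
      · exact absurd h (IPA5.no_sq_between 145 21252 (by norm_num) (by norm_num) (by norm_num) Y)
      · exact absurd h (IPA5.no_sq_between 138 19089 (by norm_num) (by norm_num) (by norm_num) Y)
      · exact absurd h (IPA5.no_sq_between 130 17000 (by norm_num) (by norm_num) (by norm_num) Y)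
      · exact absurd h (IPA5.no_sq_between 122 14991 (by norm_num) (by norm_num) (by norm_num) Y)
      · exact absurd h (IPA5.no_sq_between 114 13068 (by norm_num) (by norm_num) (by norm_num) Y)
      · exact absurd h (IPA5.no_sq_between 106 11237 (by norm_num) (by norm_num) (by norm_num) Y)
      · exact absurd h (IPA5.no_sq_between 97 9504 (by norm_num) (by norm_num) (by norm_num) Y)
      · exact absurd h (IPA5.no_sq_between 88 7875 (by norm_num) (by norm_num) (by norm_num) Y)
      · exact absurd h (IPA5.no_sq_between 79 6356 (by norm_num) (by norm_num) (by norm_num) Y)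
      · exact absurd h (IPA5.no_sq_between 70 4953 (by norm_num) (by norm_num) (by norm_num) Y)
      · exact absurd h (IPA5.no_sq_between 60 3672 (by norm_num) (by norm_num) (by norm_num) Y)
      · exact absurd h (IPA5.no_sq_between 50 2519 (by norm_num) (by norm_num) (by norm_num) Y)
      · exact absurd h (IPA5.no_sq_between 38 1500 (by norm_num) (by norm_num) (by norm_num) Y)
      · exact absurd h (IPA5.no_sq_between 24 621 (by norm_num) (by norm_num) (by norm_num) Y)
    · right; right
      have hY : Y = 0 := by nlinarith [sq_nonneg Y]
      subst hY; rfl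
    · exact absurd h (fun h' => IPA5.posCase X Y hpos h')
  · rintro (h | h | h) <;> (rw [Prod.mk.injEq] at h; obtain ⟨rfl, rfl⟩ := h) <;> norm_num
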